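/- Let N ≥ 1 and η : {1,...,N} → [0,1] with discrete smoothness constant L ∈ (0, 1/2) (i.e., |η_{j+1} - η_j| ≤ L for all j). Let R(r) = (1/N)(∑_{j ≤ r}(1-η_j) + ∑_{j > r} η_j), let r⋆ ∈ {1,...,N-1} minimize R, and let r̲ ≤ r⋆ < r̄ with γ₀ := R(r̲) - R(r⋆) > 0 and γ₁ := R(r̄) - R(r⋆) > 0. Set γ̄ = max(γ₀, γ₁). If r̄ - r̲ ≥ 2, then the imbalance ratio λ = (∑_{j=r̲}^{r̄} η_j)/(∑_{j=r̲}^{r̄} (1-η_j)) satisfies λ ≥ 1 - (Nγ̄ + LN)/(1.5 - 2L). -/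
import Mathlib

set_option maxHeartbeats 1000000 in

theorem stmt_13 (N : ℕ) (hN : 1 ≤ N) (η : ℕ → ℝ) (L : ℝ)
    (hη : ∀ j ∈ Finset.Icc 1 N, 0 ≤ η j ∧ η j ≤ 1)
    (hL0 : 0 < L) (hL : L < 1 / 2)
    (hsmooth : ∀ j, 1 ≤ j → j ≤ N - 1 → |η (j + 1) - η j| ≤ L)
    (R : ℕ → ℝ)
    (hR : ∀ r ≤ N, R r = (1 / (N : ℝ)) *
      ((∑ j ∈ Finset.Icc 1 r, (1 - η j)) + ∑ j ∈ Finset.Icc (r + 1) N, η j))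
    (rstar : ℕ) (hr1 : 1 ≤ rstar) (hrN : rstar ≤ N - 1)
    (hmin : ∀ r ≤ N, R rstar ≤ R r)
    (runder rbar : ℕ) (h0 : 1 ≤ runder) (h1 : runder ≤ rstar) (h2 : rstar < rbar)
    (h3 : rbar ≤ N) (hwidth : runder + 2 ≤ rbar)
    (γ₀ γ₁ : ℝ) (hγ₀ : γ₀ = R runder - R rstar) (hγ₁ : γ₁ = R rbar - R rstar)
    (hγ₀pos : 0 < γ₀) (hγ₁pos : 0 < γ₁) :
    (∑ j ∈ Finset.Icc runder rbar, η j) / (∑ j ∈ Finset.Icc runder rbar, (1 - η j)) ≥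
      1 - ((N : ℝ) * max γ₀ γ₁ + L * N) / (1.5 - 2 * L) := by
  have hNR : (0:ℝ) < N := by exact_mod_cast hN
  have hNne : (N:ℝ) ≠ 0 := ne_of_gt hNR
  -- telescoping identity
  have tel : ∀ a b : ℕ, a ≤ b → b ≤ N →
      (N:ℝ) * (R b - R a) = ∑ j ∈ Finset.Ioc a b, (1 - 2 * η j) := by
    intro a b hab hbN
    rw [hR b hbN, hR a (hab.trans hbN)]
    rw [show Finset.Icc 1 b = Finset.Ioc 0 b from Finset.Icc_add_one_left_eq_Ioc 0 b,
        show Finset.Icc 1 a = Finset.Ioc 0 a from Finset.Icc_add_one_left_eq_Ioc 0 a,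
        show Finset.Icc (b+1) N = Finset.Ioc b N from Finset.Icc_add_one_left_eq_Ioc b N,
        show Finset.Icc (a+1) N = Finset.Ioc a N from Finset.Icc_add_one_left_eq_Ioc a N,
        ← Finset.sum_Ioc_consecutive (fun j => 1 - η j) (Nat.zero_le a) hab,
        ← Finset.sum_Ioc_consecutive (fun j => η j) hab hbN]
    have e : ∑ j ∈ Finset.Ioc a b, (1 - 2 * η j)
        = (∑ j ∈ Finset.Ioc a b, (1 - η j)) - ∑ j ∈ Finset.Ioc a b, η j := by
      rw [← Finset.sum_sub_distrib]; exact Finset.sum_congr rfl fun j _ => by ring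
    rw [e]
    field_simp
    ring
  have hrsN : rstar ≤ N := by omega
  have hG0' : ∑ j ∈ Finset.Ioc runder rstar, (1 - 2 * η j) = -((N:ℝ) * γ₀) := by
    have t := tel runder rstar h1 hrsN
    linear_combination -t + (N:ℝ) * hγ₀
  have hG1' : ∑ j ∈ Finset.Ioc rstar rbar, (1 - 2 * η j) = (N:ℝ) * γ₁ := by
    have t := tel rstar rbar h2.le h3
    linear_combination -t - (N:ℝ) * hγ₁
  have hG0 : (N:ℝ) * γ₀ = ∑ j ∈ Finset.Ioc runder rstar, (2 * η j - 1) := by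
    have e : ∑ j ∈ Finset.Ioc runder rstar, (2 * η j - 1)
        = -∑ j ∈ Finset.Ioc runder rstar, (1 - 2 * η j) := by
      rw [← Finset.sum_neg_distrib]; exact Finset.sum_congr rfl fun j _ => by ring
    rw [e, hG0']; ring
  -- decomposition of S0 - S1
  have hS : (∑ j ∈ Finset.Icc runder rbar, (1 - η j)) - (∑ j ∈ Finset.Icc runder rbar, η j)
      = (1 - 2 * η runder) - (N:ℝ) * γ₀ + (N:ℝ) * γ₁ := by
    have e : (∑ j ∈ Finset.Icc runder rbar, (1 - η j)) - ∑ j ∈ Finset.Icc runder rbar, η j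
        = ∑ j ∈ Finset.Icc runder rbar, (1 - 2 * η j) := by
      rw [← Finset.sum_sub_distrib]; exact Finset.sum_congr rfl fun j _ => by ring
    rw [e, Finset.Icc_eq_cons_Ioc (by omega : runder ≤ rbar), Finset.sum_cons,
        ← Finset.sum_Ioc_consecutive (fun j => 1 - 2 * η j) h1 h2.le, hG0', hG1']
    ring
  -- runder < rstar
  have hlt : runder < rstar := by
    rcases lt_or_eq_of_le h1 with h | h
    · exact h
    · exfalso; rw [h] at hγ₀; simp at hγ₀; linarith
  -- smoothness chain
  have chain : ∀ j, runder ≤ j → j ≤ rstar → η j ≤ η runder + L * ((j:ℝ) - (runder:ℝ)) := by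
    intro j
    induction j with
    | zero => intro hj1 _; exact absurd hj1 (by omega)
    | succ k ih =>
      intro hj1 hj2
      rcases Nat.lt_or_ge k runder with hk | hk
      · have hek : runder = k + 1 := by omega
        subst hek
        simp
      · have hsm := hsmooth k (by omega) (by omega)
        have hup := (abs_le.mp hsm).2
        have ihk := ih hk (by omega)
        push_cast at ihk ⊢
        linarith
  -- summed chain bound
  have key2 : ∀ b, runder ≤ b → b ≤ rstar →
      ∑ j ∈ Finset.Ioc runder b, (2 * η j - 1) ≤
        ((b:ℝ) - (runder:ℝ)) * (2 * η runder - 1)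
          + L * (((b:ℝ) - (runder:ℝ)) * (((b:ℝ) - (runder:ℝ)) + 1)) := by
    intro b
    induction b with
    | zero => intro hb1 _; exact absurd hb1 (by omega)
    | succ k ih =>
      intro hb1 hb2
      rcases Nat.lt_or_ge k runder with hk | hk
      · have hek : runder = k + 1 := by omega
        subst hek
        simp
      · have ihk := ih hk (by omega)
        rw [Finset.sum_Ioc_succ_top hk]
        have hch := chain (k+1) hb1 hb2
        push_cast at ihk hch ⊢
        nlinarith [ihk, hch]
  have hm1 : (1:ℝ) ≤ (rstar:ℝ) - (runder:ℝ) := by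
    have h' : runder + 1 ≤ rstar := hlt
    have := (Nat.cast_le (α := ℝ)).mpr h'
    push_cast at this; linarith
  have hmN : (rstar:ℝ) - (runder:ℝ) + 1 ≤ (N:ℝ) := by
    have h' : rstar + 1 ≤ N + runder := by omega
    have := (Nat.cast_le (α := ℝ)).mpr h'
    push_cast at this; linarith
  have ha : 0 < (N:ℝ) * γ₀ := mul_pos hNR hγ₀pos
  have hk2 := key2 rstar hlt.le le_rfl
  rw [← hG0] at hk2
  have hX : 1 - 2 * η runder ≤ L * ((rstar:ℝ) - (runder:ℝ) + 1) := by
    nlinarith [hk2, ha, hm1]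
  have hγmax0 : γ₀ ≤ max γ₀ γ₁ := le_max_left _ _
  have hγmax1 : γ₁ ≤ max γ₀ γ₁ := le_max_right _ _
  have hbound : (∑ j ∈ Finset.Icc runder rbar, (1 - η j))
      - (∑ j ∈ Finset.Icc runder rbar, η j) ≤ (N:ℝ) * max γ₀ γ₁ + L * N := by
    rw [hS]
    have h5 : L * ((rstar:ℝ) - (runder:ℝ) + 1) ≤ L * N :=
      mul_le_mul_of_nonneg_left hmN hL0.le
    have h6 : (N:ℝ) * γ₁ ≤ (N:ℝ) * max γ₀ γ₁ := mul_le_mul_of_nonneg_left hγmax1 hNR.le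
    linarith [hX, ha, h5, h6]
  -- positivity of the denominator
  have hsubset : ∀ j ∈ Finset.Icc runder rbar, 0 ≤ 1 - η j := by
    intro j hj
    rw [Finset.mem_Icc] at hj
    have := (hη j (Finset.mem_Icc.mpr ⟨by omega, by omega⟩)).2
    linarith
  have hmem : rstar + 1 ∈ Finset.Icc runder rbar := Finset.mem_Icc.mpr ⟨by omega, by omega⟩
  have hη1 : η (rstar + 1) ≤ 1/2 := by
    have t := tel rstar (rstar+1) (Nat.le_succ _) (by omega)
    rw [Nat.Ioc_succ_singleton, Finset.sum_singleton] at t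
    have hmono := hmin (rstar+1) (by omega)
    have hnn : 0 ≤ (N:ℝ) * (R (rstar+1) - R rstar) := mul_nonneg hNR.le (by linarith)
    linarith
  have hS0pos : 0 < ∑ j ∈ Finset.Icc runder rbar, (1 - η j) :=
    Finset.sum_pos' hsubset ⟨rstar + 1, hmem, by linarith⟩
  have hcard : (∑ j ∈ Finset.Icc runder rbar, (1 - η j))
      + (∑ j ∈ Finset.Icc runder rbar, η j) = ((rbar + 1 - runder : ℕ) : ℝ) := by
    rw [← Finset.sum_add_distrib]
    simp [Nat.card_Icc]
  have hcard3 : (3:ℝ) ≤ (∑ j ∈ Finset.Icc runder rbar, (1 - η j))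
      + (∑ j ∈ Finset.Icc runder rbar, η j) := by
    rw [hcard]; exact_mod_cast (by omega : 3 ≤ rbar + 1 - runder)
  have h152 : (0:ℝ) < 1.5 - 2 * L := by nlinarith
  have hKpos : 0 < (N:ℝ) * max γ₀ γ₁ + L * N := by
    have h7 := mul_pos hNR (lt_of_lt_of_le hγ₀pos hγmax0)
    nlinarith [mul_pos hL0 hNR]
  have hD : 0 < ((N:ℝ) * max γ₀ γ₁ + L * N) / (1.5 - 2 * L) := div_pos hKpos h152
  rcases le_or_gt (∑ j ∈ Finset.Icc runder rbar, (1 - η j))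
      (∑ j ∈ Finset.Icc runder rbar, η j) with hA | hB
  · have hone : 1 ≤ (∑ j ∈ Finset.Icc runder rbar, η j)
        / (∑ j ∈ Finset.Icc runder rbar, (1 - η j)) := (one_le_div hS0pos).mpr hA
    linarith
  · have hS0big : (3:ℝ)/2 < ∑ j ∈ Finset.Icc runder rbar, (1 - η j) := by linarith
    rw [ge_iff_le, le_div_iff₀ hS0pos]
    have hDS : (N:ℝ) * max γ₀ γ₁ + L * N ≤
        (((N:ℝ) * max γ₀ γ₁ + L * N) / (1.5 - 2 * L))
          * (∑ j ∈ Finset.Icc runder rbar, (1 - η j)) := by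
      rw [div_mul_eq_mul_div, le_div_iff₀ h152]
      have hle : (1.5 - 2 * L) ≤ ∑ j ∈ Finset.Icc runder rbar, (1 - η j) := by nlinarith
      exact mul_le_mul_of_nonneg_left hle hKpos.le
    linarith [hbound, hDS]
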